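/- Let p be a prime, s ≥ 1 and r ≥ 1. In Λ = ℤ_p[[X]] set ω_n = (1+X)^{p^n} − 1 for n ≥ 0, for n ≥ m let ν_{n,m} ∈ Λ be the unique power series with ω_m·ν_{n,m} = ω_n, and set g = ν_{r,r−1} = ω_r/ω_{r−1}. Let V = Λ/(g^s). Then there exists N ≥ r such that for all n ≥ N the Λ-submodule of V generated by the image of ν_{n+1,r} equals p times the Λ-submodule generated by the image of ν_{n,r}, i.e. ν_{n+1,r}·V = p·ν_{n,r}·V. -/

import Mathlib

/-- Key auxiliary lemma: if `f 0 = 1` and `f (t+1) = f t * (q + a t * x)` with `x^s = 0`,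
then `f t` lies in the ideal generated by `q^(t-m) * x^m` for `m < s`. -/
lemma key_div {R : Type*} [CommRing R] (q x : R) (s : ℕ) (hs : 1 ≤ s) (hx : x ^ s = 0)
    (f : ℕ → R) (hf0 : f 0 = 1)
    (hstep : ∀ t, ∃ a : R, f (t + 1) = f t * (q + a * x)) :
    ∀ t, f t ∈ Ideal.span ((fun m => q ^ (t - m) * x ^ m) '' {m | m < s}) := by
  intro t
  induction t with
  | zero =>
    apply Ideal.subset_span
    exact ⟨0, hs, by simp [hf0]⟩
  | succ t ih =>
    obtain ⟨a, ha⟩ := hstep t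
    rw [ha]
    set J := Ideal.span ((fun m => q ^ (t + 1 - m) * x ^ m) '' {m | m < s}) with hJ
    have key : ∀ y ∈ Ideal.span ((fun m => q ^ (t - m) * x ^ m) '' {m | m < s}),
        y * (q + a * x) ∈ J := by
      intro y hy
      refine Submodule.span_induction ?_ ?_ ?_ ?_ hy
      · rintro z ⟨m, hm, rfl⟩
        simp only [Set.mem_setOf_eq] at hm
        rw [mul_add]
        refine J.add_mem ?_ ?_
        · have h1 : q ^ (t - m) * x ^ m * q = q ^ ((t - m) + 1 - (t + 1 - m)) *
              (q ^ (t + 1 - m) * x ^ m) := by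
            rw [← mul_assoc, ← pow_add]
            have : (t - m) + 1 - (t + 1 - m) + (t + 1 - m) = t - m + 1 := by omega
            rw [this]; ring
          rw [h1]
          exact Ideal.mul_mem_left _ _ (Ideal.subset_span ⟨m, hm, rfl⟩)
        · rcases eq_or_lt_of_le (Nat.succ_le_of_lt hm) with hm1 | hm1
          · have h0 : q ^ (t - m) * x ^ m * (a * x) = q ^ (t-m) * a * x ^ (m+1) := by ring
            rw [h0, show m + 1 = s from hm1, hx, mul_zero]
            exact J.zero_mem
          · have h2 : q ^ (t - m) * x ^ m * (a * x) =
                a * (q ^ (t + 1 - (m+1)) * x ^ (m+1)) := by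
              rw [show t + 1 - (m+1) = t - m from by omega]; ring
            rw [h2]
            exact Ideal.mul_mem_left _ _ (Ideal.subset_span ⟨m + 1, hm1, rfl⟩)
      · simp
      · intro z w _ _ hz hw
        rw [add_mul]; exact J.add_mem hz hw
      · intro c z _ hz
        rw [smul_eq_mul, mul_assoc]; exact Ideal.mul_mem_left _ _ hz
    exact key _ ih

/-- Consequence: for `t ≥ s`, `f t` is divisible by `q^(t-s+1)`. -/
lemma key_div' {R : Type*} [CommRing R] (q x : R) (s : ℕ) (hs : 1 ≤ s) (hx : x ^ s = 0)
    (f : ℕ → R) (hf0 : f 0 = 1)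
    (hstep : ∀ t, ∃ a : R, f (t + 1) = f t * (q + a * x)) :
    ∀ t, s ≤ t → ∃ w : R, f t = q ^ (t - s + 1) * w := by
  intro t ht
  have h := key_div q x s hs hx f hf0 hstep t
  have hsub : Ideal.span ((fun m => q ^ (t - m) * x ^ m) '' {m | m < s}) ≤
      Ideal.span {q ^ (t - s + 1)} := by
    rw [Ideal.span_le]
    rintro z ⟨m, hm, rfl⟩
    simp only [Set.mem_setOf_eq] at hm
    rw [SetLike.mem_coe, Ideal.mem_span_singleton]
    refine ⟨q ^ (s - 1 - m) * x ^ m, ?_⟩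
    rw [← mul_assoc, ← pow_add]
    have : t - s + 1 + (s - 1 - m) = t - m := by omega
    rw [this]
  obtain ⟨w, hw⟩ := Ideal.mem_span_singleton'.mp (hsub h)
  exact ⟨w, by rw [← hw, mul_comm]⟩

/-- The Iwasawa algebra `Λ = ℤ_p[[X]]`. -/
abbrev Lam1 (p : ℕ) [Fact p.Prime] := PowerSeries ℤ_[p]

/-- `ω_n = (1+X)^{p^n} - 1 ∈ ℤ_p[[X]]`. -/
noncomputable def om (p : ℕ) [Fact p.Prime] (n : ℕ) : Lam1 p :=
  (1 + PowerSeries.X) ^ (p ^ n) - 1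

open PowerSeries Finset in
lemma om_succ_eq (p : ℕ) [Fact p.Prime] (n : ℕ) :
    om p (n + 1) = om p n * ∑ i ∈ range p, ((1 + X : Lam1 p) ^ (p ^ n)) ^ i := by
  have h := geom_sum_mul ((1 + X : Lam1 p) ^ (p ^ n)) p
  rw [← pow_mul, ← pow_succ] at h
  rw [om, om, ← h, mul_comm]

open PowerSeries Finset in
lemma om_ne_zero (p : ℕ) [Fact p.Prime] (n : ℕ) : om p n ≠ 0 := by
  induction n with
  | zero => simpa [om] using X_ne_zero (R := ℤ_[p])
  | succ n ih =>
    rw [om_succ_eq]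
    refine mul_ne_zero ih ?_
    intro h
    have h2 := congrArg (constantCoeff (R := ℤ_[p])) h
    simp [map_sum, map_pow, map_add, constantCoeff_X] at h2
    exact (Fact.out : p.Prime).ne_zero (by exact_mod_cast h2)

open Finset in
/-- `ν_{n+1,n} = p + ω_n · c` for an explicit `c`. -/
lemma nu_succ_eq (p : ℕ) [Fact p.Prime] (ν : ℕ → ℕ → Lam1 p)
    (hν : ∀ n m : ℕ, m ≤ n → om p m * ν n m = om p n) (n : ℕ) :
    ∃ c : Lam1 p, ν (n + 1) n = (p : Lam1 p) + om p n * c := by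
  set Y : Lam1 p := (1 + PowerSeries.X) ^ (p ^ n) with hY
  refine ⟨∑ i ∈ range p, ∑ j ∈ range i, Y ^ j, ?_⟩
  have hcan : om p n * ν (n + 1) n =
      om p n * ((p : Lam1 p) + om p n * ∑ i ∈ range p, ∑ j ∈ range i, Y ^ j) := by
    rw [hν (n + 1) n (Nat.le_succ n), om_succ_eq]
    congr 1
    have hsum : ∀ i : ℕ, Y ^ i = 1 + (Y - 1) * ∑ j ∈ range i, Y ^ j := by
      intro i
      have h := geom_sum_mul Y i
      linear_combination -h
    calc ∑ i ∈ range p, Y ^ i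
        = ∑ i ∈ range p, (1 + (Y - 1) * ∑ j ∈ range i, Y ^ j) :=
          Finset.sum_congr rfl fun i _ => hsum i
      _ = (p : Lam1 p) + om p n * ∑ i ∈ range p, ∑ j ∈ range i, Y ^ j := by
          rw [Finset.sum_add_distrib, ← Finset.mul_sum, om, ← hY]
          congr 1
          simp
  exact mul_left_cancel₀ (om_ne_zero p n) hcan

theorem nu_smul_eventually_periodic_cyclotomic
    (p : ℕ) [Fact p.Prime] (s r : ℕ) (hs : 1 ≤ s) (hr : 1 ≤ r)
    (ν : ℕ → ℕ → Lam1 p)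
    (hν : ∀ n m : ℕ, m ≤ n → om p m * ν n m = om p n) :
    ∃ N : ℕ, r ≤ N ∧ ∀ n ≥ N,
      Ideal.span {ν (n + 1) r} •
          (⊤ : Submodule (Lam1 p) (Lam1 p ⧸ Ideal.span {(ν r (r - 1)) ^ s})) =
        Ideal.span {(p : Lam1 p) * ν n r} •
          (⊤ : Submodule (Lam1 p) (Lam1 p ⧸ Ideal.span {(ν r (r - 1)) ^ s})) := by
  classical
  set g : Lam1 p := ν r (r - 1) with hgdef
  set I : Ideal (Lam1 p) := Ideal.span {g ^ s} with hIdef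
  set π : Lam1 p →+* (Lam1 p ⧸ I) := Ideal.Quotient.mk I with hπdef
  -- basic identities in Λ
  have hg : om p (r - 1) * g = om p r := hν r (r - 1) (by omega)
  have hνrr : ν r r = 1 := by
    have h := hν r r le_rfl
    have h1 : om p r * ν r r = om p r * 1 := by rw [mul_one, h]
    exact mul_left_cancel₀ (om_ne_zero p r) h1
  have hchain : ∀ n, r ≤ n → ν (n + 1) r = ν n r * ν (n + 1) n := by
    intro n hn
    have h : om p r * (ν n r * ν (n + 1) n) = om p r * ν (n + 1) r := by
      rw [← mul_assoc, hν n r hn, hν (n + 1) n (Nat.le_succ n), hν (n + 1) r (by omega)]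
    exact (mul_left_cancel₀ (om_ne_zero p r) h).symm
  have hom' : ∀ n, r ≤ n → om p n = om p (r - 1) * g * ν n r := by
    intro n hn
    rw [hg, hν n r hn]
  -- fine recurrence in Λ
  have hrecΛ : ∀ n, r ≤ n → ∃ b : Lam1 p,
      ν (n + 1) r = ν n r * ((p : Lam1 p) + (b * g) * ν n r) := by
    intro n hn
    obtain ⟨c, hc⟩ := nu_succ_eq p ν hν n
    refine ⟨om p (r - 1) * c, ?_⟩
    rw [hchain n hn, hc, hom' n hn]
    ring
  -- pass to the quotient
  have hx : (π g) ^ s = 0 := by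
    rw [← map_pow, hπdef, Ideal.Quotient.eq_zero_iff_mem]
    exact Ideal.subset_span rfl
  set f : ℕ → (Lam1 p ⧸ I) := fun t => π (ν (r + t) r) with hfdef
  have hf0 : f 0 = 1 := by simp [hfdef, hνrr]
  have hrecQ : ∀ t, ∃ b : Lam1 p ⧸ I,
      f (t + 1) = f t * ((p : Lam1 p ⧸ I) + (b * π g) * f t) := by
    intro t
    obtain ⟨b, hb⟩ := hrecΛ (r + t) (Nat.le_add_right r t)
    refine ⟨π b, ?_⟩
    have : f (t + 1) = π (ν (r + t + 1) r) := rfl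
    rw [this, hb]
    push_cast [map_mul, map_add, map_natCast]
    ring
  have hstep : ∀ t, ∃ a : Lam1 p ⧸ I, f (t + 1) = f t * ((p : Lam1 p ⧸ I) + a * π g) := by
    intro t
    obtain ⟨b, hb⟩ := hrecQ t
    exact ⟨b * f t, by rw [hb]; ring⟩
  have hdvd := key_div' (p : Lam1 p ⧸ I) (π g) s hs hx f hf0 hstep
  -- conclusion
  refine ⟨r + s, Nat.le_add_right r s, ?_⟩
  intro n hn
  set t : ℕ := n - r with htdef
  have hnt : n = r + t := by omega
  have hts : s ≤ t := by omega
  obtain ⟨w, hw⟩ := hdvd t hts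
  obtain ⟨b, hb⟩ := hrecQ t
  -- the unit
  set z : Lam1 p ⧸ I := b * π g * ((p : Lam1 p ⧸ I) ^ (t - s) * w) with hzdef
  have hznil : IsNilpotent z := by
    refine ⟨s, ?_⟩
    rw [hzdef]
    rw [mul_pow, mul_pow, hx, mul_zero, zero_mul]
  have hu : IsUnit (1 + z) := hznil.isUnit_one_add
  have hkey : π (ν (n + 1) r) = π ((p : Lam1 p) * ν n r) * (1 + z) := by
    have h1 : π (ν (n + 1) r) = f (t + 1) := by rw [hnt]; rfl
    rw [h1, hb, hw]
    rw [map_mul, map_natCast]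
    have h2 : π (ν n r) = (p : Lam1 p ⧸ I) ^ (t - s + 1) * w := by rw [hnt]; exact hw
    rw [h2, hzdef]
    have h3 : (t - s + 1) = (t - s) + 1 := rfl
    rw [h3, pow_succ]
    ring
  -- turn into the submodule statement
  rw [Ideal.smul_top_eq_map, Ideal.smul_top_eq_map]
  congr 1
  rw [Ideal.map_span, Ideal.map_span, Set.image_singleton, Set.image_singleton,
    Ideal.Quotient.algebraMap_eq]
  rw [← hπdef] at *
  rw [hkey]
  exact Ideal.span_singleton_mul_right_unit hu _
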